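/- Let d ≥ 2 be an integer, c ∈ ℂ, φ(z) = z^d + c, and let α ∈ ℂ satisfy log|α| > (1/d)·max(log|c|, 0) + log 2. Let L be the real number with log|φ^[k](α)| / d^k → L as k → ∞. Then for all natural numbers j > i ≥ 0 with φ^[j](α) ≠ φ^[i](α), one has (1/d)·max(log|c|, 0) + log|φ^[j](α) − φ^[i](α)| ≤ d^{j+1}·L + 2·log 2. -/

import Mathlib

open Filter

theorem iterate_gap_bound_on_B (d : ℕ) (hd : 2 ≤ d) (c α : ℂ)
    (hα : Real.log (norm α) >
      (1 / d) * max (Real.log (norm c)) 0 + Real.log 2)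
    (L : ℝ)
    (hL : Tendsto (fun k : ℕ =>
        Real.log (norm ((fun z : ℂ => z ^ d + c)^[k] α)) / (d : ℝ) ^ k)
      atTop (nhds L)) :
    ∀ i j : ℕ, i < j →
      (fun z : ℂ => z ^ d + c)^[j] α ≠ (fun z : ℂ => z ^ d + c)^[i] α →
      (1 / d) * max (Real.log (norm c)) 0 +
          Real.log (norm ((fun z : ℂ => z ^ d + c)^[j] α -
            (fun z : ℂ => z ^ d + c)^[i] α)) ≤
        (d : ℝ) ^ (j + 1) * L + 2 * Real.log 2 := by
  set φ : ℂ → ℂ := fun z => z ^ d + c with hφ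
  set M : ℝ := max (Real.log (norm c)) 0 with hMdef
  have hM0 : 0 ≤ M := le_max_right _ _
  have hd2 : (2:ℝ) ≤ (d:ℝ) := by exact_mod_cast hd
  have hd0 : (0:ℝ) < d := by linarith
  have hlog2 : 0 < Real.log 2 := Real.log_pos one_lt_two
  have hMd : 0 ≤ (1/(d:ℝ)) * M := by positivity
  set a : ℕ → ℝ := fun k => Real.log (norm (φ^[k] α)) with hadef
  -- key one-step estimate
  have key : ∀ z : ℂ, (1/(d:ℝ)) * M + Real.log 2 < Real.log (norm z) →
      (d:ℝ) * Real.log (norm z) - Real.log 2 ≤ Real.log (norm (φ z)) := by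
    intro z hz
    have hzpos : 0 < norm z := by
      by_contra h
      have h0 : norm z = 0 := le_antisymm (not_lt.mp h) (norm_nonneg z)
      rw [h0, Real.log_zero] at hz
      linarith
    have hc : norm c ≤ Real.exp M := by
      rcases eq_or_lt_of_le (norm_nonneg c) with h0 | h0
      · rw [← h0]; exact (Real.exp_pos M).le
      · calc norm c = Real.exp (Real.log (norm c)) := (Real.exp_log h0).symm
          _ ≤ Real.exp M := Real.exp_le_exp.mpr (le_max_left _ _)
    have hzd : Real.exp M * 2 ≤ (norm z) ^ d := by
      have h1 : M + Real.log 2 ≤ (d:ℝ) * Real.log (norm z) := by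
        have h2 : (d:ℝ) * ((1/(d:ℝ)) * M + Real.log 2) ≤ (d:ℝ) * Real.log (norm z) :=
          mul_le_mul_of_nonneg_left hz.le (by linarith)
        have h3 : (d:ℝ) * (1/(d:ℝ)) = 1 := by field_simp
        nlinarith
      calc Real.exp M * 2 = Real.exp (M + Real.log 2) := by
            rw [Real.exp_add, Real.exp_log two_pos]
        _ ≤ Real.exp ((d:ℝ) * Real.log (norm z)) := Real.exp_le_exp.mpr h1
        _ = (norm z) ^ d := by
            rw [← Real.log_pow, Real.exp_log (pow_pos hzpos d)]
    have htri : (norm z) ^ d - norm c ≤ norm (φ z) := by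
      have h := norm_sub_le (z ^ d + c) c
      simp only [add_sub_cancel_right, norm_pow] at h
      simp only [hφ]
      linarith
    have hhalf : (norm z) ^ d / 2 ≤ norm (φ z) := by
      have : norm c ≤ (norm z) ^ d / 2 := by linarith [Real.exp_pos M]
      linarith
    have hφpos : 0 < (norm z) ^ d / 2 := by positivity
    calc (d:ℝ) * Real.log (norm z) - Real.log 2
        = Real.log ((norm z) ^ d / 2) := by
          rw [Real.log_div (by positivity) two_ne_zero, Real.log_pow]
      _ ≤ Real.log (norm (φ z)) := Real.log_le_log hφpos hhalf
  -- iterates stay in the region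
  have hgt : ∀ k, (1/(d:ℝ)) * M + Real.log 2 < a k := by
    intro k
    induction k with
    | zero => simpa [hadef] using hα
    | succ n ih =>
      have hstep := key (φ^[n] α) ih
      have : a (n+1) = Real.log (norm (φ (φ^[n] α))) := by
        rw [hadef]; simp [Function.iterate_succ_apply']
      rw [this]
      have hdinv : 1/(d:ℝ) ≤ 1 := by rw [div_le_one hd0]; linarith
      have h1 : (1/(d:ℝ)) * M ≤ M := by nlinarith
      have h4 : (d:ℝ) * ((1/(d:ℝ)) * M + Real.log 2) ≤ (d:ℝ) * a n :=
        mul_le_mul_of_nonneg_left ih.le hd0.le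
      have h3 : (d:ℝ) * (1/(d:ℝ)) = 1 := by field_simp
      nlinarith
  have hstep : ∀ k, (d:ℝ) * a k - Real.log 2 ≤ a (k+1) := by
    intro k
    have := key (φ^[k] α) (hgt k)
    have heq : a (k+1) = Real.log (norm (φ (φ^[k] α))) := by
      rw [hadef]; simp [Function.iterate_succ_apply']
    rw [heq]; exact this
  have hapos : ∀ k, 0 < norm (φ^[k] α) := by
    intro k
    by_contra h
    have h0 : norm (φ^[k] α) = 0 :=
      le_antisymm (not_lt.mp h) (norm_nonneg _)
    have := hgt k
    rw [hadef] at this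
    simp only [h0, Real.log_zero] at this
    linarith
  -- monotone auxiliary sequence
  set s : ℕ → ℝ := fun k => (a k - Real.log 2) / (d:ℝ) ^ k with hsdef
  have hsmono : Monotone s := by
    apply monotone_nat_of_le_succ
    intro k
    have hpk : (0:ℝ) < (d:ℝ) ^ k := pow_pos hd0 k
    have hpk1 : (0:ℝ) < (d:ℝ) ^ (k+1) := pow_pos hd0 (k+1)
    rw [hsdef]
    simp only
    rw [div_le_div_iff₀ hpk hpk1, pow_succ]
    have h1 : (a k - Real.log 2) * (d:ℝ) ≤ a (k+1) - Real.log 2 := by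
      nlinarith [hstep k, hgt k]
    calc (a k - Real.log 2) * ((d:ℝ) ^ k * (d:ℝ))
        = ((a k - Real.log 2) * (d:ℝ)) * (d:ℝ) ^ k := by ring
      _ ≤ (a (k+1) - Real.log 2) * (d:ℝ) ^ k :=
          mul_le_mul_of_nonneg_right h1 hpk.le
  have hstends : Tendsto s atTop (nhds L) := by
    have h2 : Tendsto (fun k : ℕ => Real.log 2 / (d:ℝ) ^ k) atTop (nhds 0) := by
      have : Tendsto (fun k : ℕ => ((d:ℝ)⁻¹) ^ k) atTop (nhds 0) := by
        apply tendsto_pow_atTop_nhds_zero_of_lt_one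
        · positivity
        · rw [inv_lt_one_iff₀]; right; linarith
      have := this.const_mul (Real.log 2)
      simpa [div_eq_mul_inv, inv_pow] using this
    have : Tendsto (fun k : ℕ => a k / (d:ℝ) ^ k - Real.log 2 / (d:ℝ) ^ k)
        atTop (nhds (L - 0)) := hL.sub h2
    simp only [sub_zero] at this
    convert this using 2 with k
    rw [hsdef]
    ring
  have hsle : ∀ k, s k ≤ L := fun k => hsmono.ge_of_tendsto hstends k
  have hak : ∀ k, a k ≤ (d:ℝ) ^ k * L + Real.log 2 := by
    intro k
    have := hsle k
    rw [hsdef] at this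
    simp only at this
    rw [div_le_iff₀ (pow_pos hd0 k)] at this
    nlinarith
  have hLM : (1/(d:ℝ)) * M < L := by
    have := hsle 0
    rw [hsdef] at this
    simp only [pow_zero, div_one] at this
    have h0 : a 0 = Real.log (norm α) := by rw [hadef]; simp
    rw [h0] at this
    linarith
  have hLpos : 0 < L := lt_of_le_of_lt hMd hLM
  -- a is monotone
  have hamono : Monotone a := by
    apply monotone_nat_of_le_succ
    intro k
    nlinarith [hstep k, hgt k]
  -- finish
  intro i j hij hne
  have hij' : a i ≤ a j := hamono hij.le
  have habs_le : norm (φ^[i] α) ≤ norm (φ^[j] α) := by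
    have := (Real.log_le_log_iff (hapos i) (hapos j)).mp hij'
    exact this
  have hdiffpos : 0 < norm (φ^[j] α - φ^[i] α) := by
    rw [norm_pos_iff]
    exact sub_ne_zero_of_ne hne
  have hdiff : norm (φ^[j] α - φ^[i] α) ≤ 2 * norm (φ^[j] α) := by
    calc norm (φ^[j] α - φ^[i] α)
        ≤ norm (φ^[j] α) + norm (φ^[i] α) := norm_sub_le _ _
      _ ≤ 2 * norm (φ^[j] α) := by linarith
  have hlogdiff : Real.log (norm (φ^[j] α - φ^[i] α)) ≤ Real.log 2 + a j := by
    calc Real.log (norm (φ^[j] α - φ^[i] α))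
        ≤ Real.log (2 * norm (φ^[j] α)) := Real.log_le_log hdiffpos hdiff
      _ = Real.log 2 + a j := by
          rw [Real.log_mul two_ne_zero (hapos j).ne']
  have haj := hak j
  have hjpow : (1:ℝ) ≤ (d:ℝ) ^ j := one_le_pow₀ (by linarith : (1:ℝ) ≤ d)
  have hfin : (1/(d:ℝ)) * M + (d:ℝ) ^ j * L ≤ (d:ℝ) ^ (j+1) * L := by
    rw [pow_succ]
    have h5 : (1:ℝ) * 1 ≤ (d:ℝ) ^ j * ((d:ℝ) - 1) :=
      mul_le_mul hjpow (by linarith) (by linarith) (by positivity)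
    have h6 : L ≤ (d:ℝ) ^ j * ((d:ℝ) - 1) * L :=
      le_mul_of_one_le_left hLpos.le (by linarith)
    have h7 : (d:ℝ) ^ j * (d:ℝ) * L = (d:ℝ) ^ j * L + (d:ℝ) ^ j * ((d:ℝ) - 1) * L := by ring
    linarith
  calc (1/(d:ℝ)) * M + Real.log (norm (φ^[j] α - φ^[i] α))
      ≤ (1/(d:ℝ)) * M + (Real.log 2 + a j) := by linarith
    _ ≤ (1/(d:ℝ)) * M + (Real.log 2 + ((d:ℝ) ^ j * L + Real.log 2)) := by linarith
    _ ≤ (d:ℝ) ^ (j+1) * L + 2 * Real.log 2 := by linarith
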